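/- arXiv:1503.06332 — 2 statements merged into one kernel-verified Lean document; each statement's English description precedes it below -/
import Mathlib

section
/- If Φ : 2^ω → 2^ω is a total (truth-table) Turing functional and X is Martin-Löf random with respect to the Lebesgue measure λ, then Φ(X) is Martin-Löf random with respect to the induced measure λ_Φ, where λ_Φ(A) = λ(Φ^{-1}(A)). -/
open MeasureTheory Filter

/-- Cantor space `2^ω`. -/
abbrev Cantor : Type := ℕ → Bool

/-- The first `n` bits of a sequence, as a finite binary string. -/
def pref (X : Cantor) (n : ℕ) : List Bool := List.ofFn fun i : Fin n => X i

/-- The basic open (cylinder) set determined by a finite string `σ`. -/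
def cyl (σ : List Bool) : Set Cantor := {X | pref X σ.length = σ}

/-- Partial recursiveness relative to an oracle `O : ℕ → ℕ`
(the clauses of `Nat.Partrec` plus an oracle clause). -/
inductive RecIn (O : ℕ → ℕ) : (ℕ →. ℕ) → Prop
  | zero : RecIn O (pure 0)
  | succ : RecIn O Nat.succ
  | left : RecIn O ↑fun n : ℕ => n.unpair.1
  | right : RecIn O ↑fun n : ℕ => n.unpair.2
  | oracle : RecIn O ↑O
  | pair {f g} : RecIn O f → RecIn O g → RecIn O fun n => Nat.pair <$> f n <*> g n
  | comp {f g} : RecIn O f → RecIn O g → RecIn O fun n => g n >>= f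
  | prec {f g} : RecIn O f → RecIn O g → RecIn O (Nat.unpaired fun a n =>
      n.rec (f a) fun y IH => do let i ← IH; g (Nat.pair a (Nat.pair y i)))
  | rfind {f} : RecIn O f →
      RecIn O fun a => Nat.rfind fun n => (fun m => m = 0) <$> f (Nat.pair a n)

/-- `f` is computable relative to the oracle `A ∈ 2^ω`. -/
def CantorComputableIn (A : Cantor) {α β : Type} [Primcodable α] [Primcodable β]
    (f : α → β) : Prop :=
  RecIn (fun n => (A n).toNat) fun n =>
    Part.bind (Part.ofOption (Encodable.decode (α := α) n)) fun a =>
      Part.some (Encodable.encode (f a))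

/-- `X ∈ 2^ω` is a computable sequence. -/
def ComputableSeq (X : Cantor) : Prop := Computable X

/-- A computable real: one with a computable sequence of rational approximations. -/
def ComputableReal (r : ℝ) : Prop :=
  ∃ q : ℕ → ℚ, Computable q ∧ ∀ n, |r - (q n : ℝ)| ≤ (2 : ℝ)⁻¹ ^ n

/-- A computable probability measure on Cantor space: the measures of cylinders are
uniformly computable reals. -/
def ComputableMeasure (μ : Measure Cantor) : Prop :=
  IsProbabilityMeasure μ ∧
    ∃ q : List Bool → ℕ → ℚ, Computable₂ q ∧
      ∀ σ n, |(μ (cyl σ)).toReal - (q σ n : ℝ)| ≤ (2 : ℝ)⁻¹ ^ n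

/-- A uniformly effectively open sequence of classes: each `U i` is the union of a
computable enumeration of cylinders. -/
def EffOpen (U : ℕ → Set Cantor) : Prop :=
  ∃ f : ℕ → ℕ → Option (List Bool), Computable₂ f ∧
    ∀ i, U i = ⋃ n : ℕ, Option.elim (f i n) ∅ cyl

/-- A uniformly `A`-effectively open sequence of classes. -/
def EffOpenIn (A : Cantor) (U : ℕ → Set Cantor) : Prop :=
  ∃ f : ℕ → ℕ → Option (List Bool), CantorComputableIn A (fun p : ℕ × ℕ => f p.1 p.2) ∧
    ∀ i, U i = ⋃ n : ℕ, Option.elim (f i n) ∅ cyl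

/-- A `μ`-Martin-Löf test. -/
def MLTest (μ : Measure Cantor) (U : ℕ → Set Cantor) : Prop :=
  EffOpen U ∧ ∀ i, μ (U i) ≤ (2 : ENNReal)⁻¹ ^ i

/-- `X` is `μ`-Martin-Löf random. -/
def MLRandom (μ : Measure Cantor) (X : Cantor) : Prop :=
  ∀ U : ℕ → Set Cantor, MLTest μ U → X ∉ ⋂ i, U i

/-- A `μ`-Martin-Löf test relative to the oracle `A`. -/
def MLTestIn (A : Cantor) (μ : Measure Cantor) (U : ℕ → Set Cantor) : Prop :=
  EffOpenIn A U ∧ ∀ i, μ (U i) ≤ (2 : ENNReal)⁻¹ ^ i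

/-- `X` is `μ`-Martin-Löf random relative to the oracle `A`. -/
def MLRandomIn (A : Cantor) (μ : Measure Cantor) (X : Cantor) : Prop :=
  ∀ U : ℕ → Set Cantor, MLTestIn A μ U → X ∉ ⋂ i, U i

/-- A `μ`-Schnorr test: a Martin-Löf test whose levels have measure exactly `2⁻ⁱ`. -/
def SchnorrTest (μ : Measure Cantor) (U : ℕ → Set Cantor) : Prop :=
  EffOpen U ∧ ∀ i, μ (U i) = (2 : ENNReal)⁻¹ ^ i

/-- `X` is `μ`-Schnorr random. -/
def SchnorrRandom (μ : Measure Cantor) (X : Cantor) : Prop :=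
  ∀ U : ℕ → Set Cantor, SchnorrTest μ U → X ∉ ⋂ i, U i

/-- The set of atoms of `μ`. -/
def Atoms (μ : Measure Cantor) : Set Cantor := {X | 0 < μ {X}}

/-- `lam` is the uniform (Lebesgue) measure on Cantor space. -/
def IsLebesgue (lam : Measure Cantor) : Prop :=
  ∀ σ : List Bool, lam (cyl σ) = (2 : ENNReal)⁻¹ ^ σ.length

/-- A total (truth-table) functional: every output bit is a computable function of a
computably bounded finite initial segment of the input. -/
def TTFunctional (Φ : Cantor → Cantor) : Prop :=
  ∃ (u : ℕ → ℕ) (g : List Bool → ℕ → Bool), Computable u ∧ Computable₂ g ∧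
    ∀ X n, Φ X n = g (pref X (u n)) n

/-- `B` is a Δ⁰₂ sequence: it has a uniformly computable approximation converging
pointwise to it. -/
def Delta02 (B : Cantor) : Prop :=
  ∃ Bs : ℕ → Cantor, Computable₂ (fun s n => Bs s n) ∧
    ∀ n, ∃ N, ∀ s, N ≤ s → Bs s n = B n

/-- `theta As X n` is the least stage `s` with `X↾n = As s↾n`, and `⊤ = +∞` if there
is no such stage. -/
noncomputable def theta (As : ℕ → Cantor) (X : Cantor) (n : ℕ) : ℕ∞ :=
  sInf {e : ℕ∞ | ∃ s : ℕ, e = (s : ℕ∞) ∧ pref X n = pref (As s) n}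

open Classical in
/-- The tally functional determined by the approximation `As`: the output is
`1^{θ(X,0)} 0 1^{θ(X,1)} 0 ⋯`, continuing with `1^ω` as soon as some `θ(X,n) = +∞`
(position `k` is a `0` exactly when `k = θ(X,0) + ⋯ + θ(X,m) + m` for some `m`). -/
noncomputable def tally (As : ℕ → Cantor) (X : Cantor) : Cantor := fun k =>
  if ∃ m : ℕ, (k : ℕ∞) = (∑ i ∈ Finset.range (m + 1), theta As X i) + (m : ℕ∞)
    then false else true

/-- The join `A ⊕ B` of two sequences. -/
def join (A B : Cantor) : Cantor := fun k => if k % 2 = 0 then A (k / 2) else B (k / 2)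
namespace Stmt6Aux

lemma pref_length (X : Cantor) (n : ℕ) : (pref X n).length = n := by simp [pref]

lemma pref_getD (X : Cantor) {n j : ℕ} (h : j < n) : (pref X n).getD j false = X j := by
  rw [List.getD_eq_getElem _ _ (by simpa [pref_length] using h)]
  simp [pref]

lemma mem_cyl_iff {σ : List Bool} {X : Cantor} :
    X ∈ cyl σ ↔ ∀ j < σ.length, X j = σ.getD j false := by
  constructor
  · intro h j hj
    have : (pref X σ.length).getD j false = σ.getD j false := by rw [h]
    rw [← this, pref_getD X hj]
  · intro h
    show pref X σ.length = σ
    apply List.ext_getElem (by simp [pref_length])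
    intro j h1 h2
    have hj : j < σ.length := h2
    have := (h j hj).symm
    rw [List.getD_eq_getElem _ _ hj] at this
    rw [← List.getD_eq_getElem _ false h1, pref_getD X hj, ← this]

lemma self_mem_cyl (X : Cantor) (n : ℕ) : X ∈ cyl (pref X n) := by
  show pref X (pref X n).length = pref X n
  rw [pref_length]

lemma pref_take (X : Cantor) {a b : ℕ} (h : a ≤ b) : (pref X b).take a = pref X a := by
  apply List.ext_getElem (by simp [pref_length, Nat.min_eq_left h])
  intro j h1 h2
  simp [pref, List.getElem_take]

lemma measurableSet_cyl (σ : List Bool) : MeasurableSet (cyl σ) := by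
  have : cyl σ = ⋂ j : Fin σ.length, (fun X : Cantor => X j.1) ⁻¹' {σ.getD j.1 false} := by
    ext X
    simp only [Set.mem_iInter, Set.mem_preimage, Set.mem_singleton_iff, mem_cyl_iff]
    exact ⟨fun h j => h j.1 j.2, fun h j hj => h ⟨j, hj⟩⟩
  rw [this]
  exact MeasurableSet.iInter fun j =>
    (measurable_pi_apply j.1) (measurableSet_singleton _)


open Computable Encodable

def maxU (u : ℕ → ℕ) : ℕ → ℕ := fun L =>
  Nat.rec (motive := fun _ => ℕ) 0 (fun j acc => max acc (u j)) L

lemma le_maxU (u : ℕ → ℕ) {j L : ℕ} (h : j < L) : u j ≤ maxU u L := by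
  induction L with
  | zero => omega
  | succ L ih =>
    rcases Nat.lt_succ_iff_lt_or_eq.1 h with h' | h'
    · exact le_trans (ih h') (le_max_left _ _)
    · subst h'; exact le_max_right _ _

lemma maxU_comp {u : ℕ → ℕ} (hu : Computable u) : Computable (maxU u) :=
  (Computable.nat_rec Computable.id (Computable.const 0)
    (Primrec.nat_max.to_comp.comp (Computable.snd.comp Computable.snd)
      (hu.comp (Computable.fst.comp Computable.snd))).to₂).of_eq fun L => rfl

def takeL (τ : List Bool) (n : ℕ) : List Bool :=
  Nat.rec (motive := fun _ => List Bool) [] (fun l acc => acc ++ [τ.getD l false]) n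

lemma takeL_eq {τ : List Bool} {n : ℕ} (h : n ≤ τ.length) : takeL τ n = τ.take n := by
  induction n with
  | zero => simp [takeL]
  | succ n ih =>
    have hn : n < τ.length := h
    show takeL τ n ++ [τ.getD n false] = _
    rw [ih (le_of_lt hn), List.take_succ, List.getElem?_eq_getElem hn,
      List.getD_eq_getElem _ _ hn]
    rfl

lemma takeL_comp : Computable₂ takeL :=
  (Computable.nat_rec Computable.snd (Computable.const [])
    ((Computable.list_append.comp (Computable.snd.comp Computable.snd)
      (Computable.list_cons.comp
        ((Primrec.list_getD false).to_comp.comp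
          (Computable.fst.comp Computable.fst) (Computable.fst.comp Computable.snd))
        (Computable.const []))).to₂)).to₂.of_eq fun p => rfl

def chk (u : ℕ → ℕ) (g : List Bool → ℕ → Bool) (σ τ : List Bool) : Bool :=
  Nat.rec (motive := fun _ => Bool) true
    (fun j acc => acc && decide (g (takeL τ (u j)) j = σ.getD j false)) σ.length

lemma recAnd_iff (p : ℕ → Bool) (L : ℕ) :
    (Nat.rec (motive := fun _ => Bool) true (fun j acc => acc && p j) L = true)
      ↔ ∀ j < L, p j = true := by
  induction L with
  | zero => simp
  | succ L ih =>
    show (_ && _) = true ↔ _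
    rw [Bool.and_eq_true, ih]
    constructor
    · rintro ⟨h1, h2⟩ j hj
      rcases Nat.lt_succ_iff_lt_or_eq.1 hj with h' | h'
      · exact h1 j h'
      · subst h'; exact h2
    · intro h
      exact ⟨fun j hj => h j (Nat.lt_succ_of_lt hj), h L (Nat.lt_succ_self _)⟩

lemma chk_iff {u g σ τ} : chk u g σ τ = true ↔
    ∀ j < σ.length, g (takeL τ (u j)) j = σ.getD j false := by
  rw [chk, recAnd_iff]
  simp only [decide_eq_true_eq]

lemma chk_comp {u : ℕ → ℕ} {g : List Bool → ℕ → Bool}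
    (hu : Computable u) (hg : Computable₂ g) : Computable₂ (chk u g) :=
  (Computable.nat_rec (Computable.list_length.comp Computable.fst)
    (Computable.const true)
    ((Primrec.and.to_comp.comp (Computable.snd.comp Computable.snd)
      (Primrec.eq.decide.to_comp.comp
        (hg.comp
          (takeL_comp.comp (Computable.snd.comp Computable.fst)
            (hu.comp (Computable.fst.comp Computable.snd)))
          (Computable.fst.comp Computable.snd))
        ((Primrec.list_getD false).to_comp.comp
          (Computable.fst.comp Computable.fst)
          (Computable.fst.comp Computable.snd)))).to₂)).to₂.of_eq fun p => rfl

def pull (u : ℕ → ℕ) (g : List Bool → ℕ → Bool) (f : ℕ → ℕ → Option (List Bool))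
    (i m : ℕ) : Option (List Bool) :=
  (f i m.unpair.1).bind fun σ =>
    ((Encodable.decode m.unpair.2 : Option (List Bool))).bind fun τ =>
      cond (decide (τ.length = maxU u σ.length) && chk u g σ τ) (some τ) none

lemma pull_comp {u : ℕ → ℕ} {g : List Bool → ℕ → Bool} {f : ℕ → ℕ → Option (List Bool)}
    (hu : Computable u) (hg : Computable₂ g) (hf : Computable₂ f) :
    Computable₂ (pull u g f) :=
  (Computable.option_bind
    (hf.comp Computable.fst
      (Computable.fst.comp (Computable.unpair.comp Computable.snd)))
    ((Computable.option_bind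
      (Computable.decode.comp (Computable.snd.comp
        (Computable.unpair.comp (Computable.snd.comp Computable.fst))))
      ((Computable.cond
        (Primrec.and.to_comp.comp
          (Primrec.eq.decide.to_comp.comp
            (Computable.list_length.comp Computable.snd)
            ((maxU_comp hu).comp (Computable.list_length.comp
              (Computable.snd.comp Computable.fst))))
          ((chk_comp hu hg).comp (Computable.snd.comp Computable.fst) Computable.snd))
        (Computable.option_some.comp Computable.snd)
        (Computable.const none)).to₂)).to₂)).to₂


lemma measurable_of_use {u : ℕ → ℕ} {g : List Bool → ℕ → Bool} {Φ : Cantor → Cantor}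
    (hug : ∀ X n, Φ X n = g (pref X (u n)) n) : Measurable Φ := by
  rw [measurable_pi_iff]
  intro n
  have : (fun X : Cantor => Φ X n) = fun X => g (pref X (u n)) n := by
    funext X; exact hug X n
  rw [this]
  apply measurable_to_countable'
  intro b
  have : (fun X : Cantor => g (pref X (u n)) n) ⁻¹' {b} =
      ⋃ (τ : List Bool) (_ : τ.length = u n ∧ g τ n = b), cyl τ := by
    ext X
    simp only [Set.mem_preimage, Set.mem_singleton_iff, Set.mem_iUnion]
    constructor
    · intro h
      exact ⟨pref X (u n), ⟨pref_length X (u n), h⟩, self_mem_cyl X (u n)⟩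
    · rintro ⟨τ, ⟨hl, hb⟩, hX⟩
      have : pref X (u n) = τ := by rw [← hl]; exact hX
      rw [this, hb]
  rw [this]
  exact MeasurableSet.iUnion fun τ => MeasurableSet.iUnion fun _ => measurableSet_cyl τ

lemma pull_spec {u : ℕ → ℕ} {g : List Bool → ℕ → Bool} {Φ : Cantor → Cantor}
    (hug : ∀ X n, Φ X n = g (pref X (u n)) n)
    {f : ℕ → ℕ → Option (List Bool)} {U : Set Cantor} (i : ℕ)
    (hU : U = ⋃ n : ℕ, Option.elim (f i n) ∅ cyl) :
    Φ ⁻¹' U = ⋃ m : ℕ, Option.elim (pull u g f i m) ∅ cyl := by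
  ext X
  simp only [Set.mem_preimage, hU, Set.mem_iUnion]
  constructor
  · rintro ⟨n, hmem⟩
    cases hfn : f i n with
    | none => rw [hfn] at hmem; exact absurd hmem (by simp)
    | some σ =>
      rw [hfn] at hmem
      have hmem : Φ X ∈ cyl σ := hmem
      set M := maxU u σ.length with hM
      set τ := pref X M with hτ
      have hlen : τ.length = M := pref_length X M
      have hchk : chk u g σ τ = true := by
        rw [chk_iff]
        intro j hj
        have h1 : u j ≤ M := le_maxU u hj
        rw [takeL_eq (by rw [hlen]; exact h1), hτ, pref_take X h1, ← hug X j]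
        exact mem_cyl_iff.1 hmem j hj
      refine ⟨Nat.pair n (Encodable.encode τ), ?_⟩
      have : pull u g f i (Nat.pair n (Encodable.encode τ)) = some τ := by
        simp only [pull, Nat.unpair_pair, hfn, Encodable.encodek, Option.bind_some]
        rw [hlen, ← hM]
        simp [hchk]
      rw [this]
      exact self_mem_cyl X M
  · rintro ⟨m, hmem⟩
    cases hp : pull u g f i m with
    | none => rw [hp] at hmem; exact absurd hmem (by simp)
    | some τ =>
      rw [hp] at hmem
      have hXτ : X ∈ cyl τ := hmem
      simp only [pull] at hp
      obtain ⟨σ, hσ, hp2⟩ := Option.bind_eq_some_iff.1 hp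
      obtain ⟨τ', hτ', hp3⟩ := Option.bind_eq_some_iff.1 hp2
      rcases hb : (decide (τ'.length = maxU u σ.length) && chk u g σ τ') with _ | _
      · rw [hb] at hp3; exact absurd hp3 (by simp)
      · rw [hb] at hp3
        have hττ' : τ' = τ := by simpa using hp3
        subst hττ'
        rw [Bool.and_eq_true, decide_eq_true_eq] at hb
        obtain ⟨hlen, hchk⟩ := hb
        refine ⟨m.unpair.1, ?_⟩
        rw [hσ]
        show Φ X ∈ cyl σ
        rw [mem_cyl_iff]
        intro j hj
        have h1 : u j ≤ τ'.length := by rw [hlen]; exact le_maxU u hj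
        have hpref : pref X τ'.length = τ' := hXτ
        rw [hug X j, ← pref_take X h1, hpref, ← takeL_eq h1]
        exact chk_iff.1 hchk j hj


end Stmt6Aux

/-- Preservation of Martin-Löf randomness under total (truth-table) functionals. -/
theorem stmt6 (lam : Measure Cantor) (hlam : IsLebesgue lam)
    (Φ : Cantor → Cantor) (hΦ : TTFunctional Φ) (X : Cantor)
    (hX : MLRandom lam X) : MLRandom (Measure.map Φ lam) (Φ X) := by
  obtain ⟨u, g, hu, hg, hug⟩ := hΦ
  have hΦm : Measurable Φ := Stmt6Aux.measurable_of_use hug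
  intro U hU hmem
  obtain ⟨⟨f, hf, hfU⟩, hUb⟩ := hU
  have hUm : ∀ i, MeasurableSet (U i) := by
    intro i; rw [hfU i]
    refine MeasurableSet.iUnion fun n => ?_
    cases f i n with
    | none => simpa using MeasurableSet.empty
    | some σ => exact Stmt6Aux.measurableSet_cyl σ
  have htest : MLTest lam (fun i => Φ ⁻¹' U i) := by
    constructor
    · exact ⟨Stmt6Aux.pull u g f, Stmt6Aux.pull_comp hu hg hf,
        fun i => Stmt6Aux.pull_spec hug i (hfU i)⟩
    · intro i
      calc lam (Φ ⁻¹' U i) = Measure.map Φ lam (U i) :=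
            (Measure.map_apply hΦm (hUm i)).symm
        _ ≤ (2 : ENNReal)⁻¹ ^ i := hUb i
  apply hX _ htest
  rw [Set.mem_iInter] at hmem ⊢
  exact fun i => hmem i
end

section
/- If Φ is a total truth-table functional and X is Schnorr random with respect to Lebesgue measure, then Φ(X) is Schnorr random with respect to the pushforward measure λ_Φ. -/
open MeasureTheory Filter

section Stmt7Aux

open Set

lemma length_pref (X : Cantor) (n : ℕ) : (pref X n).length = n := by simp [pref]

lemma pref_get? (X : Cantor) {n k : ℕ} (h : k < n) : (pref X n)[k]? = some (X k) := by
  simp [pref, List.getElem?_ofFn, h]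

lemma pref_eq_iff (X : Cantor) (n : ℕ) (σ : List Bool) :
    pref X n = σ ↔ σ.length = n ∧ ∀ k, k < n → σ[k]? = some (X k) := by
  constructor
  · rintro rfl
    exact ⟨length_pref X n, fun k hk => pref_get? X hk⟩
  · rintro ⟨hl, hk⟩
    apply List.ext_getElem?
    intro m
    by_cases hm : m < n
    · rw [pref_get? X hm, hk m hm]
    · rw [List.getElem?_eq_none (le_of_not_gt (by rw [length_pref]; exact hm)),
          List.getElem?_eq_none (le_of_not_gt (hl ▸ hm))]

lemma take_pref (X : Cantor) {a b : ℕ} (h : a ≤ b) : (pref X b).take a = pref X a := by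
  apply List.ext_getElem?
  intro m
  by_cases hm : m < a
  · rw [List.getElem?_take_of_lt hm, pref_get? X hm, pref_get? X (lt_of_lt_of_le hm h)]
  · rw [List.getElem?_eq_none (by rw [List.length_take, length_pref]; omega),
      List.getElem?_eq_none (by rw [length_pref]; omega)]

lemma mem_cyl {X : Cantor} {σ : List Bool} : X ∈ cyl σ ↔ pref X σ.length = σ := Iff.rfl

lemma self_mem_cyl_pref (X : Cantor) (n : ℕ) : X ∈ cyl (pref X n) := by
  rw [mem_cyl, length_pref]

lemma measurable_cyl (σ : List Bool) : MeasurableSet (cyl σ) := by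
  have : cyl σ = ⋂ k : Fin σ.length, (fun X : Cantor => X k) ⁻¹' {σ.get k} := by
    ext X
    simp only [mem_cyl, pref_eq_iff, Set.mem_iInter, Set.mem_preimage, Set.mem_singleton_iff]
    constructor
    · rintro ⟨-, hk⟩ k
      have := hk k k.isLt
      rw [List.getElem?_eq_getElem k.isLt] at this
      exact (Option.some_injective _ this).symm
    · intro h
      refine ⟨by trivial, fun k hk => ?_⟩
      rw [List.getElem?_eq_getElem hk, h ⟨k, hk⟩]; rfl
  rw [this]
  exact MeasurableSet.iInter fun k => (measurable_pi_apply _) (measurableSet_singleton _)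

lemma measurable_effSet (w : Option (List Bool)) :
    MeasurableSet (Option.elim w ∅ cyl) := by
  cases w
  · exact MeasurableSet.empty
  · exact measurable_cyl _

variable (u : ℕ → ℕ) (g : List Bool → ℕ → Bool)

/-- maximum of `u` on `[0, n)` -/
def maxU (n : ℕ) : ℕ := Nat.rec 0 (fun k IH => max IH (u k)) n

lemma le_maxU {k n : ℕ} (h : k < n) : u k ≤ maxU u n := by
  induction n with
  | zero => omega
  | succ m ih =>
    rcases Nat.lt_succ_iff_lt_or_eq.1 h with h' | h'
    · exact le_trans (ih h') (le_max_left _ _)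
    · subst h'; exact le_max_right _ _

/-- use bound for a string -/
def Lb (σ : List Bool) : ℕ := maxU u σ.length

/-- recursive take -/
def tk (τ : List Bool) (n : ℕ) : List Bool :=
  Nat.rec [] (fun k IH => IH ++ (τ[k]?).toList) n

lemma tk_eq (τ : List Bool) (n : ℕ) : tk τ n = τ.take n := by
  induction n with
  | zero => simp [tk]
  | succ m ih =>
    show tk τ m ++ (τ[m]?).toList = _
    rw [List.take_succ, ← ih]

/-- bounded check -/
def checkN (σ τ : List Bool) (n : ℕ) : Bool :=
  Nat.rec true (fun k IH => IH && decide (σ[k]? = some (g (tk τ (u k)) k))) n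

lemma checkN_iff (σ τ : List Bool) (n : ℕ) :
    checkN u g σ τ n = true ↔ ∀ k, k < n → σ[k]? = some (g (τ.take (u k)) k) := by
  induction n with
  | zero => simp [checkN]
  | succ m ih =>
    show (checkN u g σ τ m && _) = true ↔ _
    rw [Bool.and_eq_true, ih, decide_eq_true_iff, tk_eq]
    constructor
    · rintro ⟨h1, h2⟩ k hk
      rcases Nat.lt_succ_iff_lt_or_eq.1 hk with h' | h'
      · exact h1 k h'
      · subst h'; exact h2
    · intro h
      exact ⟨fun k hk => h k (Nat.lt_succ_of_lt hk), h m (Nat.lt_succ_self m)⟩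

/-- total check -/
def good (σ τ : List Bool) : Bool :=
  (decide (τ.length = Lb u σ)) && checkN u g σ τ σ.length

lemma good_iff (σ τ : List Bool) :
    good u g σ τ = true ↔
      τ.length = Lb u σ ∧ ∀ k, k < σ.length → σ[k]? = some (g (τ.take (u k)) k) := by
  rw [good, Bool.and_eq_true, decide_eq_true_iff, checkN_iff]

variable {Φ : Cantor → Cantor} (hΦe : ∀ X n, Φ X n = g (pref X (u n)) n)

include hΦe in
lemma preimage_cyl (σ : List Bool) :
    Φ ⁻¹' cyl σ = ⋃ τ : List Bool, ⋃ (_ : good u g σ τ = true), cyl τ := by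
  ext X
  simp only [Set.mem_preimage, Set.mem_iUnion]
  constructor
  · intro h
    rw [mem_cyl, pref_eq_iff] at h
    obtain ⟨-, h2⟩ := h
    refine ⟨pref X (Lb u σ), ?_, self_mem_cyl_pref X _⟩
    rw [good_iff]
    refine ⟨length_pref X _, fun k hk => ?_⟩
    rw [h2 k hk, hΦe]
    unfold Lb
    rw [take_pref X (le_maxU u hk)]
  · rintro ⟨τ, hg, hX⟩
    rw [good_iff] at hg
    obtain ⟨hlen, hk⟩ := hg
    rw [mem_cyl] at hX
    rw [mem_cyl, pref_eq_iff]
    refine ⟨rfl, fun k hkk => ?_⟩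
    rw [hΦe]
    rw [hk k hkk]
    congr 1
    rw [hlen] at hX
    rw [← hX]
    unfold Lb
    rw [take_pref X (le_maxU u hkk)]

include hΦe in
lemma measurable_Phi : Measurable Φ := by
  rw [measurable_pi_iff]
  intro n
  have he : (fun X => Φ X n) = fun X => g (pref X (u n)) n := funext fun X => hΦe X n
  rw [he]
  apply measurable_to_countable'
  intro b
  have : (fun X : Cantor => g (pref X (u n)) n) ⁻¹' {b}
      = ⋃ τ : List Bool, ⋃ (_ : τ.length = u n ∧ g τ n = b), cyl τ := by
    ext X
    simp only [Set.mem_preimage, Set.mem_singleton_iff, Set.mem_iUnion]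
    constructor
    · intro h
      exact ⟨pref X (u n), ⟨length_pref X _, h⟩, self_mem_cyl_pref X _⟩
    · rintro ⟨τ, ⟨hl, hb⟩, hX⟩
      rw [mem_cyl, hl] at hX
      rw [hX, hb]
  rw [this]
  exact MeasurableSet.iUnion fun τ => MeasurableSet.iUnion fun _ => measurable_cyl τ

end Stmt7Aux

section Comp

open Computable

variable {u : ℕ → ℕ} {g : List Bool → ℕ → Bool}

lemma computable_maxU (hu : Computable u) : Computable (maxU u) := by
  have h := Computable.nat_rec (f := fun n : ℕ => n) (g := fun _ : ℕ => 0)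
      (h := fun (_ : ℕ) (q : ℕ × ℕ) => max q.2 (u q.1))
      Computable.id (Computable.const 0)
      (Computable₂.comp Primrec.nat_max.to_comp (snd.comp snd) (hu.comp (fst.comp snd))).to₂
  exact h.of_eq fun n => rfl

lemma computable_Lb (hu : Computable u) : Computable (Lb u) :=
  ((computable_maxU hu).comp list_length).of_eq fun σ => rfl

lemma computable_toList : Computable (Option.toList : Option Bool → List Bool) :=
  (option_casesOn Computable.id (const ([] : List Bool))
    ((list_cons.comp snd (const [])).to₂ :
      Computable₂ fun (_ : Option Bool) (b : Bool) => [b])).of_eq fun o => by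
        cases o <;> rfl

lemma computable_tk : Computable₂ tk := by
  have hh : Computable (fun r : (List Bool × ℕ) × (ℕ × List Bool) =>
      r.2.2 ++ (r.1.1[r.2.1]?).toList) :=
    Computable₂.comp list_append (snd.comp snd)
      (computable_toList.comp
        (Computable₂.comp list_getElem? (fst.comp fst) (fst.comp snd)))
  have h := Computable.nat_rec (f := fun p : List Bool × ℕ => p.2)
      (g := fun _ : List Bool × ℕ => ([] : List Bool))
      (h := fun (p : List Bool × ℕ) (q : ℕ × List Bool) => q.2 ++ (p.1[q.1]?).toList)
      snd (const []) hh.to₂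
  exact h.of_eq fun p => rfl

set_option maxHeartbeats 1000000 in
lemma computable_checkL (hu : Computable u) (hg : Computable₂ g) :
    Computable (fun p : List Bool × List Bool => checkN u g p.1 p.2 p.1.length) := by
  have hh : Computable (fun r : (List Bool × List Bool) × (ℕ × Bool) =>
      r.2.2 && decide (r.1.1[r.2.1]? = some (g (tk r.1.2 (u r.2.1)) r.2.1))) :=
    Computable₂.comp Primrec.and.to_comp (snd.comp snd)
      (Computable₂.comp (Primrec₂.to_comp Primrec.eq.decide)
        (Computable₂.comp list_getElem? (fst.comp fst) (fst.comp snd))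
        (option_some.comp
          (Computable₂.comp hg
            (Computable₂.comp computable_tk (snd.comp fst) (hu.comp (fst.comp snd)))
            (fst.comp snd))))
  have h := Computable.nat_rec (f := fun p : List Bool × List Bool => p.1.length)
      (g := fun _ : List Bool × List Bool => true)
      (h := fun (p : List Bool × List Bool) (q : ℕ × Bool) =>
        q.2 && decide (p.1[q.1]? = some (g (tk p.2 (u q.1)) q.1)))
      (list_length.comp fst) (const true) hh.to₂
  exact h.of_eq fun p => rfl

lemma computable_good (hu : Computable u) (hg : Computable₂ g) :
    Computable₂ (good u g) := by
  have h : Computable (fun p : List Bool × List Bool =>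
      (decide (p.2.length = Lb u p.1)) && checkN u g p.1 p.2 p.1.length) :=
    Computable₂.comp Primrec.and.to_comp
      (Computable₂.comp (Primrec₂.to_comp Primrec.eq.decide) (list_length.comp snd)
        ((computable_Lb hu).comp fst))
      (computable_checkL hu hg)
  exact h.of_eq fun p => rfl

/-- enumeration of the preimage test -/
def femb (u : ℕ → ℕ) (g : List Bool → ℕ → Bool) (f : ℕ → ℕ → Option (List Bool))
    (i m : ℕ) : Option (List Bool) :=
  (f i m.unpair.1).bind fun σ =>
    (Encodable.decode (α := List Bool) m.unpair.2).bind fun τ =>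
      cond (good u g σ τ) (some τ) none

lemma computable_femb (hu : Computable u) (hg : Computable₂ g)
    {f : ℕ → ℕ → Option (List Bool)} (hf : Computable₂ f) :
    Computable₂ (femb u g f) := by
  have hinner : Computable₂ fun (q : (ℕ × ℕ) × List Bool) (τ : List Bool) =>
      cond (good u g q.2 τ) (some τ) none :=
    (Computable.cond
      (Computable₂.comp (computable_good hu hg) (snd.comp fst) snd)
      (option_some.comp snd) (const none)).to₂
  have h2 : Computable₂ fun (p : ℕ × ℕ) (σ : List Bool) =>
      (Encodable.decode (α := List Bool) p.2.unpair.2).bind fun τ =>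
        cond (good u g σ τ) (some τ) none :=
    (option_bind
      (Computable.decode.comp ((snd.comp Computable.unpair).comp (snd.comp fst)))
      hinner).to₂
  have h1 : Computable fun p : ℕ × ℕ => f p.1 p.2.unpair.1 :=
    Computable₂.comp hf fst ((fst.comp Computable.unpair).comp snd)
  exact (option_bind h1 h2 : Computable fun p : ℕ × ℕ => femb u g f p.1 p.2)

end Comp

section SetId

variable (u : ℕ → ℕ) (g : List Bool → ℕ → Bool)
variable {Φ : Cantor → Cantor} (hΦe : ∀ X n, Φ X n = g (pref X (u n)) n)

include hΦe in
lemma preimage_union_eq (f : ℕ → ℕ → Option (List Bool)) (i : ℕ) :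
    Φ ⁻¹' (⋃ n, Option.elim (f i n) ∅ cyl) = ⋃ m, Option.elim (femb u g f i m) ∅ cyl := by
  rw [Set.preimage_iUnion]
  ext X
  simp only [Set.mem_iUnion]
  constructor
  · rintro ⟨n, hn⟩
    cases hfi : f i n with
    | none => rw [hfi] at hn; exact absurd hn (by simp)
    | some σ =>
      rw [hfi] at hn
      have hn' : X ∈ Φ ⁻¹' cyl σ := hn
      rw [preimage_cyl u g hΦe σ] at hn'
      simp only [Set.mem_iUnion] at hn'
      obtain ⟨τ, hτ, hXτ⟩ := hn'
      refine ⟨Nat.pair n (Encodable.encode τ), ?_⟩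
      have : femb u g f i (Nat.pair n (Encodable.encode τ)) = some τ := by
        simp [femb, Nat.unpair_pair, hfi, Encodable.encodek, hτ]
      rw [this]
      exact hXτ
  · rintro ⟨m, hm⟩
    cases hfi : f i m.unpair.1 with
    | none =>
      rw [show femb u g f i m = none by simp [femb, hfi]] at hm
      exact absurd hm (by simp)
    | some σ =>
      cases hdec : (Encodable.decode (α := List Bool) m.unpair.2) with
      | none =>
        rw [show femb u g f i m = none by simp [femb, hfi, hdec]] at hm
        exact absurd hm (by simp)
      | some τ =>
        by_cases hgd : good u g σ τ = true
        · rw [show femb u g f i m = some τ by simp [femb, hfi, hdec, hgd]] at hm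
          refine ⟨m.unpair.1, ?_⟩
          rw [hfi]
          show X ∈ Φ ⁻¹' cyl σ
          rw [preimage_cyl u g hΦe σ]
          simp only [Set.mem_iUnion]
          exact ⟨τ, hgd, hm⟩
        · rw [show femb u g f i m = none by
            simp [femb, hfi, hdec, Bool.not_eq_true _ ▸ hgd]] at hm
          exact absurd hm (by simp)

end SetId

/-- Preservation of Schnorr randomness under total (truth-table) functionals. -/
theorem stmt7 (lam : Measure Cantor) (hlam : IsLebesgue lam)
    (Φ : Cantor → Cantor) (hΦ : TTFunctional Φ) (X : Cantor)
    (hX : SchnorrRandom lam X) : SchnorrRandom (Measure.map Φ lam) (Φ X) := by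
  obtain ⟨u, g, hu, hg, hΦe'⟩ := hΦ
  have hΦe : ∀ Y n, Φ Y n = g (pref Y (u n)) n := hΦe'
  have hmeas : Measurable Φ := measurable_Phi u g hΦe
  intro U hU hmem
  obtain ⟨⟨f, hf, hUf⟩, hmeasure⟩ := hU
  have hVtest : SchnorrTest lam (fun i => Φ ⁻¹' (U i)) := by
    constructor
    · refine ⟨femb u g f, computable_femb hu hg hf, fun i => ?_⟩
      show Φ ⁻¹' (U i) = _
      rw [hUf i, preimage_union_eq u g hΦe f i]
    · intro i
      have hUmeas : MeasurableSet (U i) := by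
        rw [hUf i]
        exact MeasurableSet.iUnion fun n => measurable_effSet _
      show lam (Φ ⁻¹' (U i)) = _
      rw [← Measure.map_apply hmeas hUmeas]
      exact hmeasure i
  exact hX _ hVtest (Set.mem_iInter.2 fun i => Set.mem_iInter.1 hmem i)
end
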